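/- Let V be an 𝔽₂-vector space and i ≥ j ≥ 1 integers with i − j odd. Then: (a) Π_{i,j} and Π′_{i,j} are idempotent endomorphisms of Λ^i(V) ⊗ Λ^j(V) whose sum is the identity (in particular Π_{i,j} ∘ Π′_{i,j} = Π′_{i,j} ∘ Π_{i,j} = 0); (b) im Π_{i,j} = ker Π′_{i,j} = im θ_{i−1,j+1,1} = ker θ_{i,j,1}, and this subspace contains W_{(i,j)}(V); (c) im Π′_{i,j} = ker Π_{i,j} = im Dθ_{i,j,1} = ker Dθ_{i−1,j+1,1}. -/
import Mathlib


open scoped TensorProduct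

noncomputable section

abbrev F2 := ZMod 2

variable {V : Type*} [AddCommGroup V] [Module F2 V]

/-- The wedge `x₁ ∧ ⋯ ∧ xₙ` of a family of vectors, as an element of the `n`-th exterior
power `⋀[𝔽₂]^n V`. -/
def wedge (n : ℕ) (x : Fin n → V) : ⋀[F2]^n V :=
  ⟨ExteriorAlgebra.ιMulti F2 n x,
    ExteriorAlgebra.ιMulti_range F2 n (Set.mem_range_self x)⟩

/-- `IsTheta i j t θ` says that
`θ : Λ^i(V) ⊗ Λ^j(V) → Λ^a(V) ⊗ Λ^b(V)` (where `a = i + t` and `b = j − t`) is the map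
`θ_{i,j,t}` determined on decomposables by
`x ⊗ (b₁ ∧ ⋯ ∧ b_j) ↦ Σ_{|S| = t} (x ∧ b_S) ⊗ b_{Sᶜ}`,
the sum being over the `t`-element subsets `S` of `{1, …, j}` and `b_S` denoting the wedge
of the `b_s`, `s ∈ S`, in increasing order. -/
def IsTheta (i j t : ℕ) {a b : ℕ} (ha : i + t = a) (hb : j - t = b)
    (θ : (⋀[F2]^i V) ⊗[F2] (⋀[F2]^j V) →ₗ[F2] (⋀[F2]^a V) ⊗[F2] (⋀[F2]^b V)) : Prop :=
  ∀ (x : Fin i → V) (y : Fin j → V),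
    θ (wedge i x ⊗ₜ wedge j y) =
      ∑ S ∈ (Finset.powersetCard t (Finset.univ : Finset (Fin j))).attach,
        wedge a (Fin.append x
            (y ∘ (S.1.orderEmbOfFin (Finset.mem_powersetCard.mp S.2).2)) ∘ Fin.cast ha.symm)
          ⊗ₜ
        wedge b ((y ∘ ((S.1)ᶜ.orderEmbOfFin
            (by simp [Finset.card_compl, (Finset.mem_powersetCard.mp S.2).2]))) ∘
          Fin.cast hb.symm)

/-- `IsDTheta i j t Dθ` says that
`Dθ : Λ^a(V) ⊗ Λ^b(V) → Λ^i(V) ⊗ Λ^j(V)` (where `a = i + t` and `j = b + t`) is the dual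
map `Dθ_{i,j,t}` determined on decomposables by
`(a₁ ∧ ⋯ ∧ a_{i+t}) ⊗ y ↦ Σ_{|S| = t} a_{Sᶜ} ⊗ (y ∧ a_S)`. -/
def IsDTheta (i j t : ℕ) {a b : ℕ} (ha : i + t = a) (hb : b + t = j)
    (Dθ : (⋀[F2]^a V) ⊗[F2] (⋀[F2]^b V) →ₗ[F2] (⋀[F2]^i V) ⊗[F2] (⋀[F2]^j V)) : Prop :=
  ∀ (x : Fin a → V) (y : Fin b → V),
    Dθ (wedge a x ⊗ₜ wedge b y) =
      ∑ S ∈ (Finset.powersetCard t (Finset.univ : Finset (Fin a))).attach,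
        wedge i ((x ∘ ((S.1)ᶜ.orderEmbOfFin
            (by simp [Finset.card_compl, (Finset.mem_powersetCard.mp S.2).2]))) ∘
          Fin.cast (by omega : i = a - t))
          ⊗ₜ
        wedge j (Fin.append y
            (x ∘ (S.1.orderEmbOfFin (Finset.mem_powersetCard.mp S.2).2)) ∘ Fin.cast hb.symm)

set_option synthInstance.maxHeartbeats 1000000
set_option maxHeartbeats 1000000

/-! ### Auxiliary lemmas -/

lemma add_self_zero {M : Type*} [AddCommGroup M] [Module F2 M] (a : M) : a + a = 0 := by
  have : a + a = ((1 : F2) + 1) • a := by rw [add_smul, one_smul]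
  rw [this, show ((1:F2)+1) = 0 by decide, zero_smul]

lemma odd_smul {M : Type*} [AddCommGroup M] [Module F2 M] {p : ℕ} (hp : Odd p) (d : M) :
    p • d = d := by
  obtain ⟨k, rfl⟩ := hp
  calc (2*k+1) • d = (2:ℕ) • (k • d) + d := by
        rw [add_nsmul, one_nsmul, mul_nsmul, smul_comm]
    _ = d := by rw [two_nsmul, add_self_zero, zero_add]

lemma wedge_perm (n : ℕ) (x : Fin n → V) (σ : Equiv.Perm (Fin n)) :
    wedge n (x ∘ σ) = wedge n x := by
  apply Subtype.ext
  show ExteriorAlgebra.ιMulti F2 n (x ∘ σ) = ExteriorAlgebra.ιMulti F2 n x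
  rw [AlternatingMap.map_perm]
  rcases Int.units_eq_one_or (Equiv.Perm.sign σ) with h | h <;> rw [h]
  · rw [one_smul]
  · rw [Units.smul_def, Units.val_neg, Units.val_one, neg_smul, one_smul,
      neg_eq_iff_add_eq_zero]
    exact add_self_zero _

lemma wedge_span (n : ℕ) :
    Submodule.span F2 (Set.range (wedge n (V := V))) = ⊤ := by
  apply Submodule.map_injective_of_injective (Submodule.injective_subtype (⋀[F2]^n V))
  rw [Submodule.map_span, Submodule.map_top, Submodule.range_subtype]
  have himg : (⋀[F2]^n V).subtype '' Set.range (wedge n (V := V)) =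
      Set.range (ExteriorAlgebra.ιMulti F2 n (M := V)) := by
    ext z
    constructor
    · rintro ⟨-, ⟨x, rfl⟩, rfl⟩; exact ⟨x, rfl⟩
    · rintro ⟨x, rfl⟩; exact ⟨wedge n x, ⟨x, rfl⟩, rfl⟩
  rw [himg, ExteriorAlgebra.ιMulti_span_fixedDegree]

lemma tensor_ext {m n : ℕ} {M : Type*} [AddCommGroup M] [Module F2 M]
    {f g : (⋀[F2]^m V) ⊗[F2] (⋀[F2]^n V) →ₗ[F2] M}
    (h : ∀ (x : Fin m → V) (y : Fin n → V),
      f (wedge m x ⊗ₜ wedge n y) = g (wedge m x ⊗ₜ wedge n y)) : f = g := by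
  apply TensorProduct.ext'
  have step1 : ∀ (x : Fin m → V) (w : ⋀[F2]^n V),
      f (wedge m x ⊗ₜ w) = g (wedge m x ⊗ₜ w) := by
    intro x w
    have := LinearMap.ext_on (wedge_span n (V := V))
      (f := f ∘ₗ TensorProduct.mk F2 _ _ (wedge m x))
      (g := g ∘ₗ TensorProduct.mk F2 _ _ (wedge m x))
      (by rintro z ⟨y, rfl⟩; exact h x y)
    exact LinearMap.congr_fun this w
  intro z w
  have := LinearMap.ext_on (wedge_span m (V := V))
    (f := f ∘ₗ (TensorProduct.mk F2 _ _).flip w)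
    (g := g ∘ₗ (TensorProduct.mk F2 _ _).flip w)
    (by rintro z ⟨x, rfl⟩; exact step1 x w)
  exact LinearMap.congr_fun this z

lemma fin_cast_id {n : ℕ} (h : n = n) : Fin.cast h = id := by
  funext k; apply Fin.ext; simp

omit [AddCommGroup V] [Module F2 V] in
lemma snoc_comp_castSucc {m : ℕ} {α : Sort*} (x : Fin m → α) (c : α) :
    (Fin.snoc x c : Fin (m+1) → α) ∘ Fin.castSucc = x := by
  funext k; simp

omit [AddCommGroup V] [Module F2 V] in
lemma snoc_comp_succAbove_castSucc {m : ℕ} {α : Sort*} (x : Fin (m+1) → α) (c : α)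
    (s : Fin (m+1)) :
    (Fin.snoc x c : Fin (m+2) → α) ∘ (Fin.castSucc s).succAbove =
      Fin.snoc (x ∘ s.succAbove) c := by
  funext k
  refine Fin.lastCases ?_ (fun k' => ?_) k
  · have h1 : (Fin.castSucc s).succAbove (Fin.last m) = Fin.last (m+1) := by
      rw [Fin.succAbove_of_le_castSucc _ _ (by simpa using Fin.le_last s), Fin.succ_last]
    simp [Function.comp, h1]
  · simp [Function.comp, Fin.castSucc_succAbove_castSucc]

lemma wedge_snoc_rotate {m : ℕ} (x : Fin (m+1) → V) (s : Fin (m+1)) :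
    wedge (m+1) (Fin.snoc (x ∘ s.succAbove) (x s)) = wedge (m+1) x := by
  have hg : Function.Injective (Fin.snoc (α := fun _ => Fin (m+1)) s.succAbove s) := by
    intro k₁ k₂ hk
    rcases Fin.eq_castSucc_or_eq_last k₁ with ⟨j₁, rfl⟩ | rfl <;>
      rcases Fin.eq_castSucc_or_eq_last k₂ with ⟨j₂, rfl⟩ | rfl <;>
      simp only [Fin.snoc_castSucc, Fin.snoc_last] at hk
    · rw [Fin.succAbove_right_injective hk]
    · exact absurd hk (Fin.succAbove_ne s j₁)
    · exact absurd hk.symm (Fin.succAbove_ne s j₂)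
    · rfl
  let σ : Equiv.Perm (Fin (m+1)) :=
    Equiv.ofBijective _ ((Finite.injective_iff_bijective).mp hg)
  have : Fin.snoc (x ∘ s.succAbove) (x s) = x ∘ σ := by
    show _ = x ∘ (Fin.snoc (α := fun _ => Fin (m+1)) s.succAbove s)
    rw [Fin.comp_snoc]
  rw [this, wedge_perm]

lemma wedge_snoc_snoc_swap {m : ℕ} (x : Fin m → V) (a b : V) :
    wedge (m+2) (Fin.snoc (Fin.snoc x a) b) = wedge (m+2) (Fin.snoc (Fin.snoc x b) a) := by
  have h : Fin.snoc (Fin.snoc x a) b =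
      (Fin.snoc (Fin.snoc x b) a : Fin (m+2) → V) ∘
        (Equiv.swap (Fin.last (m+1)) (Fin.castSucc (Fin.last m))) := by
    funext k
    refine Fin.lastCases ?_ (fun k' => ?_) k
    · simp [Equiv.swap_apply_left]
    · refine Fin.lastCases ?_ (fun k'' => ?_) k'
      · simp [Equiv.swap_apply_right]
      · have h1 : Fin.castSucc (Fin.castSucc k'') ≠ Fin.last (m+1) := by
          simp [Fin.ext_iff]; omega
        have h2 : Fin.castSucc (Fin.castSucc k'') ≠ Fin.castSucc (Fin.last m) := by
          simp [Fin.ext_iff]; omega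
        simp [Equiv.swap_apply_of_ne_of_ne h1 h2]
  rw [h, wedge_perm]

omit [AddCommGroup V] [Module F2 V] in
lemma succAbove_comp_symm {n : ℕ} {u v : Fin (n+2)} {r r' : Fin (n+1)}
    (h1 : u.succAbove r = v) (h2 : v.succAbove r' = u) :
    u.succAbove ∘ r.succAbove = v.succAbove ∘ r'.succAbove := by
  have huv : u ≠ v := h1 ▸ (Fin.ne_succAbove u r)
  have hcard : ({u, v}ᶜ : Finset (Fin (n+2))).card = n := by
    rw [Finset.card_compl, Finset.card_insert_of_notMem (by simpa using huv),
      Finset.card_singleton]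
    simp
  have key : ∀ (w w' : Fin (n+2)) (t t' : Fin (n+1)), w.succAbove t = w' →
      ∀ k, w.succAbove (t.succAbove k) ∉ ({w, w'} : Finset (Fin (n+2))) := by
    intro w w' t t' hw k
    simp only [Finset.mem_insert, Finset.mem_singleton]
    push_neg
    exact ⟨Fin.succAbove_ne w _, by
      rw [← hw]; exact fun hc => Fin.succAbove_ne t k (Fin.succAbove_right_injective hc)⟩
  have m1 : StrictMono (u.succAbove ∘ r.succAbove) :=
    (Fin.strictMono_succAbove u).comp (Fin.strictMono_succAbove r)
  have m2 : StrictMono (v.succAbove ∘ r'.succAbove) :=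
    (Fin.strictMono_succAbove v).comp (Fin.strictMono_succAbove r')
  have e1 := Finset.orderEmbOfFin_unique hcard
    (f := u.succAbove ∘ r.succAbove) (fun k => by simpa using key u v r r' h1 k) m1
  have e2 := Finset.orderEmbOfFin_unique hcard
    (f := v.succAbove ∘ r'.succAbove) (fun k => by
      have := key v u r' r h2 k
      simp only [Finset.mem_compl, Finset.mem_insert, Finset.mem_singleton] at *
      tauto) m2
  rw [e1, e2]

/-! ### Singleton forms of `IsTheta` and `IsDTheta` -/

lemma singleton_mem_pc {n : ℕ} (s : Fin n) :
    {s} ∈ Finset.powersetCard 1 (Finset.univ : Finset (Fin n)) := by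
  simp [Finset.mem_powersetCard]

omit [AddCommGroup V] [Module F2 V] in
lemma succAbove_eq_orderEmb {n : ℕ} (s : Fin (n+1))
    (h : ({s}ᶜ : Finset (Fin (n+1))).card = n) :
    s.succAbove = ⇑(Finset.orderEmbOfFin _ h) :=
  Finset.orderEmbOfFin_unique h (fun k => by simp [Fin.succAbove_ne s k])
    (Fin.strictMono_succAbove s)

omit [AddCommGroup V] [Module F2 V] in
lemma append_emb_eq_snoc {m n : ℕ} (x : Fin m → V) (y : Fin (n+1) → V) (s : Fin (n+1))
    (h1 : ({s} : Finset (Fin (n+1))).card = 1) (h2 : m + 1 = m + 1) :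
    Fin.append x (y ∘ ⇑(Finset.orderEmbOfFin {s} h1)) ∘ Fin.cast h2.symm =
      Fin.snoc x (y s) := by
  rw [fin_cast_id, Function.comp_id, Fin.append_right_eq_snoc]
  have := Finset.orderEmbOfFin_mem {s} h1 0
  simp only [Finset.mem_singleton] at this
  simp [Function.comp, this]

omit [AddCommGroup V] [Module F2 V] in
lemma comp_emb_eq_succAbove {n : ℕ} (y : Fin (n+1) → V) (s : Fin (n+1))
    (h1 : ({s}ᶜ : Finset (Fin (n+1))).card = n) (h2 : n = n) :
    (y ∘ ⇑(Finset.orderEmbOfFin _ h1)) ∘ Fin.cast h2 = y ∘ s.succAbove := by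
  rw [fin_cast_id, Function.comp_id, ← succAbove_eq_orderEmb s h1]

lemma isTheta_one {i b : ℕ}
    {θ : (⋀[F2]^i V) ⊗[F2] (⋀[F2]^(b+1) V) →ₗ[F2] (⋀[F2]^(i+1) V) ⊗[F2] (⋀[F2]^b V)}
    (hθ : IsTheta i (b+1) 1 rfl rfl θ) (x : Fin i → V) (y : Fin (b+1) → V) :
    θ (wedge i x ⊗ₜ wedge (b+1) y) =
      ∑ s : Fin (b+1), wedge (i+1) (Fin.snoc x (y s)) ⊗ₜ wedge b (y ∘ s.succAbove) := by
  refine (hθ x y).trans ?_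
  refine (Finset.sum_bij
    (fun (s : Fin (b+1)) (_ : s ∈ Finset.univ) =>
      (⟨{s}, singleton_mem_pc s⟩ :
        {S // S ∈ Finset.powersetCard 1 (Finset.univ : Finset (Fin (b+1)))}))
    (fun _ _ => Finset.mem_attach _ _) ?_ ?_ ?_).symm
  · intro s _ s' _ h
    simpa using h
  · rintro ⟨S, hS⟩ _
    obtain ⟨s, rfl⟩ := Finset.card_eq_one.mp (Finset.mem_powersetCard.mp hS).2
    exact ⟨s, Finset.mem_univ s, rfl⟩
  · intro s _
    exact congrArg₂ (fun u v => u ⊗ₜ v)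
      (congrArg (wedge (i+1)) (append_emb_eq_snoc x y s _ rfl)).symm
      (congrArg (wedge b) (comp_emb_eq_succAbove y s _ rfl)).symm

lemma isDTheta_one {i b : ℕ}
    {Dθ : (⋀[F2]^(i+1) V) ⊗[F2] (⋀[F2]^b V) →ₗ[F2] (⋀[F2]^i V) ⊗[F2] (⋀[F2]^(b+1) V)}
    (hDθ : IsDTheta i (b+1) 1 rfl rfl Dθ) (x : Fin (i+1) → V) (y : Fin b → V) :
    Dθ (wedge (i+1) x ⊗ₜ wedge b y) =
      ∑ s : Fin (i+1), wedge i (x ∘ s.succAbove) ⊗ₜ wedge (b+1) (Fin.snoc y (x s)) := by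
  refine (hDθ x y).trans ?_
  refine (Finset.sum_bij
    (fun (s : Fin (i+1)) (_ : s ∈ Finset.univ) =>
      (⟨{s}, singleton_mem_pc s⟩ :
        {S // S ∈ Finset.powersetCard 1 (Finset.univ : Finset (Fin (i+1)))}))
    (fun _ _ => Finset.mem_attach _ _) ?_ ?_ ?_).symm
  · intro s _ s' _ h
    simpa using h
  · rintro ⟨S, hS⟩ _
    obtain ⟨s, rfl⟩ := Finset.card_eq_one.mp (Finset.mem_powersetCard.mp hS).2
    exact ⟨s, Finset.mem_univ s, rfl⟩
  · intro s _
    exact congrArg₂ (fun u v => u ⊗ₜ v)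
      (congrArg (wedge i) (comp_emb_eq_succAbove x s _ rfl)).symm
      (congrArg (wedge (b+1)) (append_emb_eq_snoc y x s _ rfl)).symm

/-! ### The flip involution on pairs of indices -/

def flipIdx {n : ℕ} (p : Fin (n+2) × Fin (n+1)) : Fin (n+2) × Fin (n+1) :=
  (p.1.succAbove p.2, Classical.choose (Fin.exists_succAbove_eq (Fin.ne_succAbove p.1 p.2)))

lemma flipIdx_fst {n : ℕ} (p : Fin (n+2) × Fin (n+1)) :
    (flipIdx p).1 = p.1.succAbove p.2 := rfl

lemma flipIdx_spec {n : ℕ} (p : Fin (n+2) × Fin (n+1)) :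
    (flipIdx p).1.succAbove (flipIdx p).2 = p.1 :=
  Classical.choose_spec (Fin.exists_succAbove_eq (Fin.ne_succAbove p.1 p.2))

lemma flipIdx_flipIdx {n : ℕ} (p : Fin (n+2) × Fin (n+1)) : flipIdx (flipIdx p) = p := by
  have h1 := flipIdx_spec p
  have h2 := flipIdx_spec (flipIdx p)
  have hfst : (flipIdx (flipIdx p)).1 = p.1 := by rw [flipIdx_fst (flipIdx p)]; exact h1
  refine Prod.ext hfst ?_
  rw [hfst, flipIdx_fst] at h2
  exact Fin.succAbove_right_injective h2

lemma flipIdx_ne {n : ℕ} (p : Fin (n+2) × Fin (n+1)) : flipIdx p ≠ p := by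
  intro hc
  exact Fin.succAbove_ne p.1 p.2 (by rw [← flipIdx_fst, hc])

/-! ### The three composition identities on decomposables -/

lemma keyA {m n : ℕ}
    {θA : (⋀[F2]^m V) ⊗[F2] (⋀[F2]^(n+2) V) →ₗ[F2] (⋀[F2]^(m+1) V) ⊗[F2] (⋀[F2]^(n+1) V)}
    (hA : IsTheta m (n+2) 1 rfl rfl θA)
    {θC : (⋀[F2]^(m+1) V) ⊗[F2] (⋀[F2]^(n+1) V) →ₗ[F2] (⋀[F2]^(m+2) V) ⊗[F2] (⋀[F2]^n V)}
    (hC : IsTheta (m+1) (n+1) 1 rfl rfl θC)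
    (x : Fin m → V) (y : Fin (n+2) → V) :
    θC (θA (wedge m x ⊗ₜ wedge (n+2) y)) = 0 := by
  rw [isTheta_one hA x y, map_sum]
  have step : ∀ s : Fin (n+2),
      θC (wedge (m+1) (Fin.snoc x (y s)) ⊗ₜ wedge (n+1) (y ∘ s.succAbove)) =
        ∑ r : Fin (n+1),
          wedge (m+2) (Fin.snoc (Fin.snoc x (y s)) ((y ∘ s.succAbove) r)) ⊗ₜ
            wedge n ((y ∘ s.succAbove) ∘ r.succAbove) :=
    fun s => isTheta_one hC _ _
  rw [Finset.sum_congr rfl fun s _ => step s, ← Finset.sum_product']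
  refine Finset.sum_ninvolution flipIdx ?_ ?_ (fun _ => Finset.mem_univ _)
    flipIdx_flipIdx
  · intro p
    have hspec := flipIdx_spec p
    have hcomp : ((y ∘ (flipIdx p).1.succAbove) ∘ (flipIdx p).2.succAbove) =
        ((y ∘ p.1.succAbove) ∘ p.2.succAbove) := by
      rw [Function.comp_assoc, Function.comp_assoc]
      exact congrArg (y ∘ ·) (succAbove_comp_symm (flipIdx_fst p).symm hspec).symm
    have hfirst : wedge (m+2)
          (Fin.snoc (Fin.snoc x (y (flipIdx p).1)) ((y ∘ (flipIdx p).1.succAbove) (flipIdx p).2))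
        = wedge (m+2) (Fin.snoc (Fin.snoc x (y p.1)) ((y ∘ p.1.succAbove) p.2)) := by
      have : (y ∘ (flipIdx p).1.succAbove) (flipIdx p).2 = y p.1 := by
        simp only [Function.comp_apply, hspec]
      rw [this]
      have : (y ∘ p.1.succAbove) p.2 = y (flipIdx p).1 := by
        simp only [Function.comp_apply, flipIdx_fst]
      rw [this]
      exact wedge_snoc_snoc_swap x (y (flipIdx p).1) (y p.1)
    have : (wedge (m+2) (Fin.snoc (Fin.snoc x (y (flipIdx p).1))
          ((y ∘ (flipIdx p).1.succAbove) (flipIdx p).2)) ⊗ₜ[F2]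
        wedge n ((y ∘ (flipIdx p).1.succAbove) ∘ (flipIdx p).2.succAbove)) =
        (wedge (m+2) (Fin.snoc (Fin.snoc x (y p.1)) ((y ∘ p.1.succAbove) p.2)) ⊗ₜ[F2]
        wedge n ((y ∘ p.1.succAbove) ∘ p.2.succAbove)) := by
      rw [hcomp, hfirst]
    rw [this]
    exact add_self_zero _
  · intro p _
    exact flipIdx_ne p

lemma keyB {m n : ℕ}
    {θB : (⋀[F2]^(m+1) V) ⊗[F2] (⋀[F2]^(n+1) V) →ₗ[F2] (⋀[F2]^m V) ⊗[F2] (⋀[F2]^(n+2) V)}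
    (hB : IsDTheta m (n+2) 1 rfl rfl θB)
    {θD : (⋀[F2]^(m+2) V) ⊗[F2] (⋀[F2]^n V) →ₗ[F2] (⋀[F2]^(m+1) V) ⊗[F2] (⋀[F2]^(n+1) V)}
    (hD : IsDTheta (m+1) (n+1) 1 rfl rfl θD)
    (x : Fin (m+2) → V) (y : Fin n → V) :
    θB (θD (wedge (m+2) x ⊗ₜ wedge n y)) = 0 := by
  rw [isDTheta_one hD x y, map_sum]
  have step : ∀ s : Fin (m+2),
      θB (wedge (m+1) (x ∘ s.succAbove) ⊗ₜ wedge (n+1) (Fin.snoc y (x s))) =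
        ∑ r : Fin (m+1),
          wedge m ((x ∘ s.succAbove) ∘ r.succAbove) ⊗ₜ
            wedge (n+2) (Fin.snoc (Fin.snoc y (x s)) ((x ∘ s.succAbove) r)) :=
    fun s => isDTheta_one hB _ _
  rw [Finset.sum_congr rfl fun s _ => step s, ← Finset.sum_product']
  refine Finset.sum_ninvolution flipIdx ?_ ?_ (fun _ => Finset.mem_univ _)
    flipIdx_flipIdx
  · intro p
    have hspec := flipIdx_spec p
    have hcomp : ((x ∘ (flipIdx p).1.succAbove) ∘ (flipIdx p).2.succAbove) =
        ((x ∘ p.1.succAbove) ∘ p.2.succAbove) := by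
      rw [Function.comp_assoc, Function.comp_assoc]
      exact congrArg (x ∘ ·) (succAbove_comp_symm (flipIdx_fst p).symm hspec).symm
    have hsecond : wedge (n+2)
          (Fin.snoc (Fin.snoc y (x (flipIdx p).1)) ((x ∘ (flipIdx p).1.succAbove) (flipIdx p).2))
        = wedge (n+2) (Fin.snoc (Fin.snoc y (x p.1)) ((x ∘ p.1.succAbove) p.2)) := by
      have e1 : (x ∘ (flipIdx p).1.succAbove) (flipIdx p).2 = x p.1 := by
        simp only [Function.comp_apply, hspec]
      have e2 : (x ∘ p.1.succAbove) p.2 = x (flipIdx p).1 := by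
        simp only [Function.comp_apply, flipIdx_fst]
      rw [e1, e2]
      exact wedge_snoc_snoc_swap y (x (flipIdx p).1) (x p.1)
    have : (wedge m ((x ∘ (flipIdx p).1.succAbove) ∘ (flipIdx p).2.succAbove) ⊗ₜ[F2]
        wedge (n+2) (Fin.snoc (Fin.snoc y (x (flipIdx p).1))
          ((x ∘ (flipIdx p).1.succAbove) (flipIdx p).2))) =
        (wedge m ((x ∘ p.1.succAbove) ∘ p.2.succAbove) ⊗ₜ[F2]
        wedge (n+2) (Fin.snoc (Fin.snoc y (x p.1)) ((x ∘ p.1.succAbove) p.2))) := by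
      rw [hcomp, hsecond]
    rw [this]
    exact add_self_zero _
  · intro p _
    exact flipIdx_ne p

lemma partPi {m n : ℕ}
    {θA : (⋀[F2]^m V) ⊗[F2] (⋀[F2]^(n+2) V) →ₗ[F2] (⋀[F2]^(m+1) V) ⊗[F2] (⋀[F2]^(n+1) V)}
    (hA : IsTheta m (n+2) 1 rfl rfl θA)
    {θB : (⋀[F2]^(m+1) V) ⊗[F2] (⋀[F2]^(n+1) V) →ₗ[F2] (⋀[F2]^m V) ⊗[F2] (⋀[F2]^(n+2) V)}
    (hB : IsDTheta m (n+2) 1 rfl rfl θB)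
    (x : Fin (m+1) → V) (y : Fin (n+1) → V) :
    θA (θB (wedge (m+1) x ⊗ₜ wedge (n+1) y)) =
      (∑ s : Fin (m+1), ∑ r : Fin (n+1),
        wedge (m+1) (Fin.snoc (x ∘ s.succAbove) (y r)) ⊗ₜ
          wedge (n+1) (Fin.snoc (y ∘ r.succAbove) (x s))) +
      (m+1) • (wedge (m+1) x ⊗ₜ wedge (n+1) y) := by
  rw [isDTheta_one hB x y, map_sum]
  have step : ∀ s : Fin (m+1),
      θA (wedge m (x ∘ s.succAbove) ⊗ₜ wedge (n+2) (Fin.snoc y (x s))) =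
        (∑ r : Fin (n+1), wedge (m+1) (Fin.snoc (x ∘ s.succAbove) (y r)) ⊗ₜ
          wedge (n+1) (Fin.snoc (y ∘ r.succAbove) (x s))) +
        wedge (m+1) x ⊗ₜ wedge (n+1) y := by
    intro s
    rw [isTheta_one hA, Fin.sum_univ_castSucc]
    congr 1
    · refine Finset.sum_congr rfl fun r _ => ?_
      rw [Fin.snoc_castSucc, snoc_comp_succAbove_castSucc]
    · rw [Fin.snoc_last, wedge_snoc_rotate, Fin.succAbove_last, snoc_comp_castSucc]
  rw [Finset.sum_congr rfl fun s _ => step s, Finset.sum_add_distrib, Finset.sum_const,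
    Finset.card_univ, Fintype.card_fin]

lemma partPi' {m n : ℕ}
    {θC : (⋀[F2]^(m+1) V) ⊗[F2] (⋀[F2]^(n+1) V) →ₗ[F2] (⋀[F2]^(m+2) V) ⊗[F2] (⋀[F2]^n V)}
    (hC : IsTheta (m+1) (n+1) 1 rfl rfl θC)
    {θD : (⋀[F2]^(m+2) V) ⊗[F2] (⋀[F2]^n V) →ₗ[F2] (⋀[F2]^(m+1) V) ⊗[F2] (⋀[F2]^(n+1) V)}
    (hD : IsDTheta (m+1) (n+1) 1 rfl rfl θD)
    (x : Fin (m+1) → V) (y : Fin (n+1) → V) :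
    θD (θC (wedge (m+1) x ⊗ₜ wedge (n+1) y)) =
      (∑ r : Fin (n+1), ∑ s : Fin (m+1),
        wedge (m+1) (Fin.snoc (x ∘ s.succAbove) (y r)) ⊗ₜ
          wedge (n+1) (Fin.snoc (y ∘ r.succAbove) (x s))) +
      (n+1) • (wedge (m+1) x ⊗ₜ wedge (n+1) y) := by
  rw [isTheta_one hC x y, map_sum]
  have step : ∀ r : Fin (n+1),
      θD (wedge (m+2) (Fin.snoc x (y r)) ⊗ₜ wedge n (y ∘ r.succAbove)) =
        (∑ s : Fin (m+1), wedge (m+1) (Fin.snoc (x ∘ s.succAbove) (y r)) ⊗ₜ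
          wedge (n+1) (Fin.snoc (y ∘ r.succAbove) (x s))) +
        wedge (m+1) x ⊗ₜ wedge (n+1) y := by
    intro r
    rw [isDTheta_one hD, Fin.sum_univ_castSucc]
    congr 1
    · refine Finset.sum_congr rfl fun s _ => ?_
      rw [Fin.snoc_castSucc, snoc_comp_succAbove_castSucc]
    · rw [Fin.snoc_last, Fin.succAbove_last, snoc_comp_castSucc, wedge_snoc_rotate]
  rw [Finset.sum_congr rfl fun r _ => step r, Finset.sum_add_distrib, Finset.sum_const,
    Finset.card_univ, Fintype.card_fin]

lemma keyC {m n : ℕ} (hodd : Odd (m + n))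
    {θA : (⋀[F2]^m V) ⊗[F2] (⋀[F2]^(n+2) V) →ₗ[F2] (⋀[F2]^(m+1) V) ⊗[F2] (⋀[F2]^(n+1) V)}
    (hA : IsTheta m (n+2) 1 rfl rfl θA)
    {θB : (⋀[F2]^(m+1) V) ⊗[F2] (⋀[F2]^(n+1) V) →ₗ[F2] (⋀[F2]^m V) ⊗[F2] (⋀[F2]^(n+2) V)}
    (hB : IsDTheta m (n+2) 1 rfl rfl θB)
    {θC : (⋀[F2]^(m+1) V) ⊗[F2] (⋀[F2]^(n+1) V) →ₗ[F2] (⋀[F2]^(m+2) V) ⊗[F2] (⋀[F2]^n V)}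
    (hC : IsTheta (m+1) (n+1) 1 rfl rfl θC)
    {θD : (⋀[F2]^(m+2) V) ⊗[F2] (⋀[F2]^n V) →ₗ[F2] (⋀[F2]^(m+1) V) ⊗[F2] (⋀[F2]^(n+1) V)}
    (hD : IsDTheta (m+1) (n+1) 1 rfl rfl θD)
    (x : Fin (m+1) → V) (y : Fin (n+1) → V) :
    θA (θB (wedge (m+1) x ⊗ₜ wedge (n+1) y)) + θD (θC (wedge (m+1) x ⊗ₜ wedge (n+1) y)) =
      wedge (m+1) x ⊗ₜ wedge (n+1) y := by
  rw [partPi hA hB x y, partPi' hC hD x y, Finset.sum_comm]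
  set S := ∑ r : Fin (n+1), ∑ s : Fin (m+1),
        wedge (m+1) (Fin.snoc (x ∘ s.succAbove) (y r)) ⊗ₜ[F2]
          wedge (n+1) (Fin.snoc (y ∘ r.succAbove) (x s)) with hS
  set D := wedge (m+1) x ⊗ₜ[F2] wedge (n+1) y with hD'
  have : S + (m+1) • D + (S + (n+1) • D) = (S + S) + ((m+1) • D + (n+1) • D) := by abel
  rw [this, add_self_zero, zero_add, ← add_nsmul]
  apply odd_smul
  obtain ⟨k, hk⟩ := hodd
  exact ⟨k + 1, by omega⟩

/-- For `i ≥ j ≥ 1` with `i − j` odd: the maps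
`Π = θ_{i−1,j+1,1} ∘ Dθ_{i−1,j+1,1}` and `Π′ = Dθ_{i,j,1} ∘ θ_{i,j,1}` are idempotent with
sum the identity (so `Π ∘ Π′ = Π′ ∘ Π = 0`);
`im Π = ker Π′ = im θ_{i−1,j+1,1} = ker θ_{i,j,1}` and this subspace contains
`W_{(i,j)}(V) = ⋂_{1 ≤ t ≤ j} ker θ_{i,j,t}`; and
`im Π′ = ker Π = im Dθ_{i,j,1} = ker Dθ_{i−1,j+1,1}`. -/
theorem pi_projectors {V : Type*} [AddCommGroup V] [Module F2 V]
    (i j : ℕ) (hj : 1 ≤ j) (hij : j ≤ i) (hodd : Odd (i - j))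
    (θ₁ : (⋀[F2]^(i - 1) V) ⊗[F2] (⋀[F2]^(j + 1) V) →ₗ[F2] (⋀[F2]^i V) ⊗[F2] (⋀[F2]^j V))
    (hθ₁ : IsTheta (i - 1) (j + 1) 1 (by omega) (by omega) θ₁)
    (Dθ₁ : (⋀[F2]^i V) ⊗[F2] (⋀[F2]^j V) →ₗ[F2] (⋀[F2]^(i - 1) V) ⊗[F2] (⋀[F2]^(j + 1) V))
    (hDθ₁ : IsDTheta (i - 1) (j + 1) 1 (by omega) (by omega) Dθ₁)
    (Θ : ∀ t : ℕ, (⋀[F2]^i V) ⊗[F2] (⋀[F2]^j V) →ₗ[F2]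
      (⋀[F2]^(i + t) V) ⊗[F2] (⋀[F2]^(j - t) V))
    (hΘ : ∀ t : ℕ, t ≤ j → IsTheta i j t rfl rfl (Θ t))
    (Dθ₂ : (⋀[F2]^(i + 1) V) ⊗[F2] (⋀[F2]^(j - 1) V) →ₗ[F2] (⋀[F2]^i V) ⊗[F2] (⋀[F2]^j V))
    (hDθ₂ : IsDTheta i j 1 rfl (by omega) Dθ₂) :
    ((θ₁ ∘ₗ Dθ₁) ∘ₗ (θ₁ ∘ₗ Dθ₁) = θ₁ ∘ₗ Dθ₁ ∧
     (Dθ₂ ∘ₗ Θ 1) ∘ₗ (Dθ₂ ∘ₗ Θ 1) = Dθ₂ ∘ₗ Θ 1 ∧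
     θ₁ ∘ₗ Dθ₁ + Dθ₂ ∘ₗ Θ 1 = LinearMap.id ∧
     (θ₁ ∘ₗ Dθ₁) ∘ₗ (Dθ₂ ∘ₗ Θ 1) = 0 ∧ (Dθ₂ ∘ₗ Θ 1) ∘ₗ (θ₁ ∘ₗ Dθ₁) = 0) ∧
    (LinearMap.range (θ₁ ∘ₗ Dθ₁) = LinearMap.ker (Dθ₂ ∘ₗ Θ 1) ∧
     LinearMap.ker (Dθ₂ ∘ₗ Θ 1) = LinearMap.range θ₁ ∧
     LinearMap.range θ₁ = LinearMap.ker (Θ 1) ∧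
     (⨅ t ∈ Finset.Icc 1 j, LinearMap.ker (Θ t)) ≤ LinearMap.range (θ₁ ∘ₗ Dθ₁)) ∧
    (LinearMap.range (Dθ₂ ∘ₗ Θ 1) = LinearMap.ker (θ₁ ∘ₗ Dθ₁) ∧
     LinearMap.ker (θ₁ ∘ₗ Dθ₁) = LinearMap.range Dθ₂ ∧
     LinearMap.range Dθ₂ = LinearMap.ker Dθ₁) := by
  obtain ⟨i', rfl⟩ : ∃ i', i = i' + 1 := ⟨i - 1, by omega⟩
  obtain ⟨j', rfl⟩ : ∃ j', j = j' + 1 := ⟨j - 1, by omega⟩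
  have hodd' : Odd (i' + j') := by
    rw [Nat.odd_iff] at hodd ⊢
    omega
  have hΘ1 : IsTheta (i'+1) (j'+1) 1 rfl rfl (Θ 1) := hΘ 1 (by omega)
  have EA : Θ 1 ∘ₗ θ₁ = 0 := tensor_ext fun x y => by
    simp only [LinearMap.comp_apply, LinearMap.zero_apply]
    exact keyA (m := i') (n := j') hθ₁ hΘ1 x y
  have EB : Dθ₁ ∘ₗ Dθ₂ = 0 := tensor_ext fun x y => by
    simp only [LinearMap.comp_apply, LinearMap.zero_apply]
    exact keyB (m := i') (n := j') hDθ₁ hDθ₂ x y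
  have EC : θ₁ ∘ₗ Dθ₁ + Dθ₂ ∘ₗ Θ 1 = LinearMap.id := tensor_ext fun x y => by
    simp only [LinearMap.add_apply, LinearMap.comp_apply, LinearMap.id_apply]
    exact keyC (m := i') (n := j') hodd' hθ₁ hDθ₁ hΘ1 hDθ₂ x y
  set P := θ₁ ∘ₗ Dθ₁ with hP
  set Q := Dθ₂ ∘ₗ Θ 1 with hQ
  have hid : ∀ v, P v + Q v = v := fun v => by
    simpa using LinearMap.congr_fun EC v
  have hPQ : P ∘ₗ Q = 0 := by
    apply LinearMap.ext
    intro v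
    have h0 := LinearMap.congr_fun EB (Θ 1 v)
    simp only [LinearMap.comp_apply, LinearMap.zero_apply, hP, hQ] at h0 ⊢
    rw [h0, map_zero]
  have hQP : Q ∘ₗ P = 0 := by
    apply LinearMap.ext
    intro v
    have h0 := LinearMap.congr_fun EA (Dθ₁ v)
    simp only [LinearMap.comp_apply, LinearMap.zero_apply, hP, hQ] at h0 ⊢
    rw [h0, map_zero]
  have hPP : P ∘ₗ P = P := by
    apply LinearMap.ext
    intro v
    have h1 : P (P v + Q v) = P v := congrArg P (hid v)
    rw [map_add] at h1
    have h2 := LinearMap.congr_fun hPQ v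
    simp only [LinearMap.comp_apply, LinearMap.zero_apply] at h2
    rw [h2, add_zero] at h1
    simpa using h1
  have hQQ : Q ∘ₗ Q = Q := by
    apply LinearMap.ext
    intro v
    have h1 : Q (P v + Q v) = Q v := congrArg Q (hid v)
    rw [map_add] at h1
    have h2 := LinearMap.congr_fun hQP v
    simp only [LinearMap.comp_apply, LinearMap.zero_apply] at h2
    rw [h2, zero_add] at h1
    simpa using h1
  have hrangeP_kerQ : LinearMap.range P = LinearMap.ker Q := by
    apply le_antisymm
    · rintro v ⟨u, rfl⟩
      rw [LinearMap.mem_ker]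
      have := LinearMap.congr_fun hQP u
      simpa using this
    · intro v hv
      rw [LinearMap.mem_ker] at hv
      have := hid v
      rw [hv, add_zero] at this
      exact ⟨v, this⟩
  have hkerQ_rangeθ : LinearMap.ker Q = LinearMap.range θ₁ := by
    apply le_antisymm
    · intro v hv
      rw [LinearMap.mem_ker] at hv
      have := hid v
      rw [hv, add_zero] at this
      exact ⟨Dθ₁ v, this⟩
    · rintro v ⟨u, rfl⟩
      rw [LinearMap.mem_ker]
      have h0 := LinearMap.congr_fun EA u
      simp only [LinearMap.comp_apply, LinearMap.zero_apply] at h0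
      show Dθ₂ (Θ 1 (θ₁ u)) = 0
      rw [h0, map_zero]
  have hrangeθ_kerΘ : LinearMap.range θ₁ = LinearMap.ker (Θ 1) := by
    apply le_antisymm
    · rintro v ⟨u, rfl⟩
      rw [LinearMap.mem_ker]
      have h0 := LinearMap.congr_fun EA u
      simpa using h0
    · intro v hv
      rw [LinearMap.mem_ker] at hv
      rw [← hkerQ_rangeθ, LinearMap.mem_ker]
      show Dθ₂ (Θ 1 v) = 0
      rw [hv, map_zero]
  have hrangeQ_kerP : LinearMap.range Q = LinearMap.ker P := by
    apply le_antisymm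
    · rintro v ⟨u, rfl⟩
      rw [LinearMap.mem_ker]
      have := LinearMap.congr_fun hPQ u
      simpa using this
    · intro v hv
      rw [LinearMap.mem_ker] at hv
      have := hid v
      rw [hv, zero_add] at this
      exact ⟨v, this⟩
  have hkerP_rangeD : LinearMap.ker P = LinearMap.range Dθ₂ := by
    apply le_antisymm
    · intro v hv
      rw [LinearMap.mem_ker] at hv
      have := hid v
      rw [hv, zero_add] at this
      exact ⟨Θ 1 v, this⟩
    · rintro v ⟨u, rfl⟩
      rw [LinearMap.mem_ker]
      have h0 := LinearMap.congr_fun EB u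
      simp only [LinearMap.comp_apply, LinearMap.zero_apply] at h0
      show θ₁ (Dθ₁ (Dθ₂ u)) = 0
      rw [h0, map_zero]
  have hrangeD_kerD : LinearMap.range Dθ₂ = LinearMap.ker Dθ₁ := by
    apply le_antisymm
    · rintro v ⟨u, rfl⟩
      rw [LinearMap.mem_ker]
      have h0 := LinearMap.congr_fun EB u
      simpa using h0
    · intro v hv
      rw [LinearMap.mem_ker] at hv
      rw [← hkerP_rangeD, LinearMap.mem_ker]
      show θ₁ (Dθ₁ v) = 0
      rw [hv, map_zero]
  have hinf : (⨅ t ∈ Finset.Icc 1 (j'+1), LinearMap.ker (Θ t)) ≤ LinearMap.range P := by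
    have h1 : (⨅ t ∈ Finset.Icc 1 (j'+1), LinearMap.ker (Θ t)) ≤ LinearMap.ker (Θ 1) :=
      biInf_le _ (Finset.mem_Icc.mpr ⟨le_refl 1, by omega⟩)
    have e : LinearMap.ker (Θ 1) = LinearMap.range P :=
      (hrangeθ_kerΘ.symm.trans hkerQ_rangeθ.symm).trans hrangeP_kerQ.symm
    exact e ▸ h1
  exact ⟨⟨hPP, hQQ, EC, hPQ, hQP⟩,
    ⟨hrangeP_kerQ, hkerQ_rangeθ, hrangeθ_kerΘ, hinf⟩,
    ⟨hrangeQ_kerP, hkerP_rangeD, hrangeD_kerD⟩⟩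

end
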